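/- Let Ω ⊂ ℝ² be a bounded measurable set with Lebesgue measure |Ω| > 0, and let x₁, …, x_m be independent random variables each distributed uniformly on Ω (law equal to the normalized restriction of Lebesgue measure to Ω). Let w : Ω → ℝ be measurable and essentially bounded with ‖w‖_{L²(Ω)} > 0, and define the discrete norm ‖w‖*² := (|Ω|/m) Σ_{i=1}^m |w(x_i)|². Then for every δ ∈ (0,1), with probability at least 1 − δ: | ‖w‖_{L²(Ω)} − ‖w‖* | ≤ |Ω|^{1/2} · ‖w‖_{L^∞(Ω)} · (mδ)^{−1/2}. -/

import Mathlib

open MeasureTheory ProbabilityTheory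

/-- Probabilistic discretisation of the L² norm under i.i.d. uniform sampling:
with probability at least 1 − δ the Monte Carlo norm is within
|Ω|^{1/2} ‖w‖_{L^∞} (mδ)^{-1/2} of the true L² norm. -/
theorem monte_carlo_L2_norm_concentration
    {Ω : Type*} [MeasureSpace Ω] [IsProbabilityMeasure (ℙ : Measure Ω)]
    (D : Set (EuclideanSpace ℝ (Fin 2)))
    (hDmeas : MeasurableSet D) (hDbdd : Bornology.IsBounded D)
    (hDpos : 0 < volume D)
    (m : ℕ) (hm : 1 ≤ m)
    (x : Fin m → Ω → EuclideanSpace ℝ (Fin 2))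
    (hmeas : ∀ i, Measurable (x i))
    (hindep : iIndepFun x ℙ)
    (hunif : ∀ i, Measure.map (x i) ℙ = (volume D)⁻¹ • volume.restrict D)
    (w : EuclideanSpace ℝ (Fin 2) → ℝ)
    (hw : Measurable w)
    (hwbdd : MemLp w ⊤ (volume.restrict D))
    (hwpos : 0 < ∫ y in D, (w y) ^ 2)
    (δ : ℝ) (hδ : δ ∈ Set.Ioo (0 : ℝ) 1) :
    ENNReal.ofReal (1 - δ) ≤
      ℙ {ω | |Real.sqrt (∫ y in D, (w y) ^ 2)
              - Real.sqrt ((volume D).toReal / m * ∑ i : Fin m, (w (x i ω)) ^ 2)|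
            ≤ Real.sqrt (volume D).toReal *
                (eLpNorm w ⊤ (volume.restrict D)).toReal / Real.sqrt (m * δ)} := by
  classical
  set μD := volume.restrict D with hμD
  set VE := volume D with hVE
  set V := VE.toReal with hV
  set I := ∫ y in D, (w y) ^ 2 with hI
  set L := (eLpNorm w ⊤ μD).toReal with hL
  have hδ0 : 0 < δ := hδ.1
  have hδ1 : δ < 1 := hδ.2
  have hm0 : (0 : ℝ) < (m : ℝ) := by exact_mod_cast hm
  have hVEfin : VE ≠ ⊤ := hDbdd.measure_lt_top.ne
  have hVpos : 0 < V := ENNReal.toReal_pos hDpos.ne' hVEfin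
  haveI : IsFiniteMeasure μD := ⟨by
    rw [hμD, Measure.restrict_apply_univ]; exact hDbdd.measure_lt_top⟩
  -- almost-everywhere bound by the essential sup
  have hLae : ∀ᵐ y ∂μD, |w y| ≤ L := by
    have h1 : ∀ᵐ y ∂μD, (‖w y‖₊ : ENNReal) ≤ eLpNormEssSup w μD :=
      ae_le_eLpNormEssSup
    have hfin : eLpNormEssSup w μD ≠ ⊤ := by
      have h2 := hwbdd.2
      rw [eLpNorm_exponent_top] at h2
      exact h2.ne
    filter_upwards [h1] with y hy
    have := ENNReal.toReal_mono hfin hy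
    simpa [hL, eLpNorm_exponent_top, Real.norm_eq_abs] using this
  have hL0 : 0 ≤ L := ENNReal.toReal_nonneg
  -- I ≤ L^2 * V, hence L > 0
  have hw2int : Integrable (fun y => (w y) ^ 2) μD := by
    refine (MemLp.of_bound ((hw.pow_const 2).aestronglyMeasurable) (L ^ 2) ?_).integrable le_rfl
    filter_upwards [hLae] with y hy
    have : |w y| ^ 2 ≤ L ^ 2 := by
      apply pow_le_pow_left₀ (abs_nonneg _) hy
    simpa [Real.norm_eq_abs, abs_pow, sq_abs] using this
  have hILV : I ≤ L ^ 2 * V := by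
    have h := integral_mono_ae hw2int (integrable_const (L ^ 2))
      (by filter_upwards [hLae] with y hy
          calc (w y) ^ 2 = |w y| ^ 2 := by rw [sq_abs]
          _ ≤ L ^ 2 := pow_le_pow_left₀ (abs_nonneg _) hy 2)
    rw [hI]
    calc (∫ y in D, (w y) ^ 2) ≤ ∫ _ in D, L ^ 2 := h
    _ = L ^ 2 * V := by
        rw [setIntegral_const, smul_eq_mul, hV, hVE]
        · rw [measureReal_def]; ring
  have hLpos : 0 < L := by
    rcases lt_or_eq_of_le hL0 with h | h
    · exact h
    · exfalso
      rw [← h] at hILV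
      simp at hILV
      linarith
  -- integral transfer along the uniform law
  have key : ∀ (g : EuclideanSpace ℝ (Fin 2) → ℝ), Measurable g → ∀ i : Fin m,
      ∫ ω, g (x i ω) ∂ℙ = V⁻¹ * ∫ y in D, g y := by
    intro g hg i
    rw [← integral_map (hmeas i).aemeasurable hg.aestronglyMeasurable, hunif i,
      integral_smul_measure, ENNReal.toReal_inv, smul_eq_mul]
  -- the random variables
  set Vm := V / (m : ℝ) with hVm
  have hVm0 : 0 ≤ Vm := div_nonneg hVpos.le hm0.le
  set X : Fin m → Ω → ℝ := fun i ω => Vm * (w (x i ω)) ^ 2 with hX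
  have hXmeas : ∀ i, Measurable (X i) :=
    fun i => measurable_const.mul ((hw.comp (hmeas i)).pow_const 2)
  -- a.e. bound on w(x i ω)
  have hXae : ∀ i : Fin m, ∀ᵐ ω ∂ℙ, |w (x i ω)| ≤ L := by
    intro i
    have hset : MeasurableSet {y : EuclideanSpace ℝ (Fin 2) | |w y| ≤ L} :=
      measurableSet_le hw.abs measurable_const
    refine (ae_map_iff (hmeas i).aemeasurable hset).mp ?_
    rw [hunif i]
    exact Measure.ae_smul_measure hLae _
  have hXL2 : ∀ i, MemLp (X i) 2 ℙ := by
    intro i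
    refine MemLp.of_bound (hXmeas i).aestronglyMeasurable (Vm * L ^ 2) ?_
    filter_upwards [hXae i] with ω hω
    rw [Real.norm_eq_abs, hX]
    rw [abs_mul, abs_of_nonneg hVm0]
    have : |(w (x i ω)) ^ 2| ≤ L ^ 2 := by
      rw [abs_pow, sq_abs, ← sq_abs]
      exact pow_le_pow_left₀ (abs_nonneg _) hω 2
    exact mul_le_mul_of_nonneg_left this hVm0
  -- expectations
  have hEX : ∀ i, ∫ ω, X i ω ∂ℙ = I / m := by
    intro i
    have : ∫ ω, X i ω ∂ℙ = Vm * ∫ ω, (w (x i ω)) ^ 2 ∂ℙ := by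
      simp only [hX]; rw [integral_const_mul]
    rw [this, key (fun y => (w y) ^ 2) (hw.pow_const 2) i]
    rw [hVm]
    field_simp
    ring
  set T : Ω → ℝ := fun ω => ∑ i : Fin m, X i ω with hT
  have hTmeas : Measurable T := Finset.measurable_sum _ fun i _ => hXmeas i
  have hTsum : T = ∑ i : Fin m, X i := by
    ext ω; rw [hT]; simp [Finset.sum_apply]
  have hTL2 : MemLp T 2 ℙ := by
    rw [hTsum]; exact memLp_finset_sum' _ fun i _ => hXL2 i
  have hET : ∫ ω, T ω ∂ℙ = I := by
    rw [hT, integral_finset_sum _ fun i _ => (hXL2 i).integrable one_le_two]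
    simp only [hEX]
    rw [Finset.sum_const, Finset.card_univ, Fintype.card_fin, nsmul_eq_mul]
    field_simp
  -- variance bound
  have hEX2 : ∀ i, ∫ ω, (X i ω) ^ 2 ∂ℙ ≤ Vm ^ 2 * (V⁻¹ * (L ^ 2 * I)) := by
    intro i
    have h1 : ∫ ω, (X i ω) ^ 2 ∂ℙ = Vm ^ 2 * ∫ ω, (w (x i ω)) ^ 4 ∂ℙ := by
      simp only [hX, mul_pow, ← pow_mul]
      rw [integral_const_mul]
    rw [h1, key (fun y => (w y) ^ 4) (hw.pow_const 4) i]
    have hw4int : Integrable (fun y => (w y) ^ 4) μD := by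
      refine (MemLp.of_bound ((hw.pow_const 4).aestronglyMeasurable) (L ^ 4) ?_).integrable le_rfl
      filter_upwards [hLae] with y hy
      have : |w y| ^ 4 ≤ L ^ 4 := pow_le_pow_left₀ (abs_nonneg _) hy 4
      simpa [Real.norm_eq_abs, abs_pow, sq_abs] using this
    have h4 : (∫ y in D, (w y) ^ 4) ≤ L ^ 2 * I := by
      rw [hI, ← integral_const_mul]
      refine integral_mono_ae hw4int (hw2int.const_mul _) ?_
      filter_upwards [hLae] with y hy
      have h2 : (w y) ^ 2 ≤ L ^ 2 := by
        rw [← sq_abs]; exact pow_le_pow_left₀ (abs_nonneg _) hy 2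
      have : (w y) ^ 4 = (w y) ^ 2 * (w y) ^ 2 := by ring
      rw [this]
      exact mul_le_mul_of_nonneg_right h2 (sq_nonneg _)
    have hVinv : 0 ≤ V⁻¹ := inv_nonneg.mpr hVpos.le
    have h5 := mul_le_mul_of_nonneg_left h4 hVinv
    exact mul_le_mul_of_nonneg_left h5 (sq_nonneg _)
  have hVar : variance T ℙ ≤ Vm * (L ^ 2 * I) := by
    have hre : variance T ℙ = ∑ i : Fin m, variance (X i) ℙ := by
      rw [hTsum]
      exact IndepFun.variance_sum (fun i _ => hXL2 i)
        (fun i _ j _ hij => (hindep.indepFun hij).comp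
          (measurable_const.mul (hw.pow_const 2))
          (measurable_const.mul (hw.pow_const 2)))
    rw [hre]
    have hvle : ∀ i : Fin m, variance (X i) ℙ ≤ Vm ^ 2 * (V⁻¹ * (L ^ 2 * I)) := by
      intro i
      refine le_trans (variance_le_expectation_sq (hXmeas i).aestronglyMeasurable) ?_
      simpa [Pi.pow_apply] using hEX2 i
    calc ∑ i : Fin m, variance (X i) ℙ ≤ ∑ _i : Fin m, Vm ^ 2 * (V⁻¹ * (L ^ 2 * I)) :=
          Finset.sum_le_sum fun i _ => hvle i
    _ = m * (Vm ^ 2 * (V⁻¹ * (L ^ 2 * I))) := by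
          rw [Finset.sum_const, Finset.card_univ, Fintype.card_fin, nsmul_eq_mul]
    _ = Vm * (L ^ 2 * I) := by
          rw [hVm]; field_simp
  -- Chebyshev
  set B := Real.sqrt V * L / Real.sqrt (m * δ) with hB
  set c := Real.sqrt I * B with hc
  have hmδ : 0 < (m : ℝ) * δ := mul_pos hm0 hδ0
  have hBpos : 0 < B := by
    apply div_pos (mul_pos (Real.sqrt_pos.mpr hVpos) hLpos) (Real.sqrt_pos.mpr hmδ)
  have hcpos : 0 < c := mul_pos (Real.sqrt_pos.mpr hwpos) hBpos
  have hc2 : c ^ 2 = I * (V * L ^ 2 / ((m : ℝ) * δ)) := by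
    rw [hc, hB, mul_pow, div_pow, mul_pow, Real.sq_sqrt hwpos.le, Real.sq_sqrt hVpos.le,
      Real.sq_sqrt hmδ.le]
  have hcheb := meas_ge_le_variance_div_sq (μ := ℙ) hTL2 hcpos
  have hvc : variance T ℙ / c ^ 2 ≤ δ := by
    rw [div_le_iff₀ (by positivity)]
    refine le_trans hVar ?_
    have heq : δ * c ^ 2 = Vm * (L ^ 2 * I) := by
      rw [hc2, hVm]
      field_simp
    rw [heq]
  have hEle : ℙ {ω | c ≤ |T ω - ∫ ω', T ω' ∂ℙ|} ≤ ENNReal.ofReal δ :=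
    le_trans hcheb (ENNReal.ofReal_le_ofReal hvc)
  have hEmeas : MeasurableSet {ω | c ≤ |T ω - I|} := by
    apply measurableSet_le measurable_const
    exact (hTmeas.sub measurable_const).abs
  have hEle' : ℙ {ω | c ≤ |T ω - I|} ≤ ENNReal.ofReal δ := by
    have : {ω | c ≤ |T ω - I|} = {ω | c ≤ |T ω - ∫ ω', T ω' ∂ℙ|} := by
      simp_rw [hET]
    rw [this]; exact hEle
  -- complement inclusion
  have hsubset : {ω | c ≤ |T ω - I|}ᶜ ⊆
      {ω | |Real.sqrt I - Real.sqrt ((volume D).toReal / m * ∑ i : Fin m, (w (x i ω)) ^ 2)|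
        ≤ B} := by
    intro ω hω
    simp only [Set.mem_compl_iff, Set.mem_setOf_eq, not_le] at hω
    have hTω : (volume D).toReal / (m : ℝ) * ∑ i : Fin m, (w (x i ω)) ^ 2 = T ω := by
      rw [hT, hX, Finset.mul_sum]
    simp only [Set.mem_setOf_eq, hTω]
    -- now show |√I - √(T ω)| ≤ B given |T ω - I| < c = √I * B
    have hT0 : 0 ≤ T ω := by
      rw [hT]
      exact Finset.sum_nonneg fun i _ => mul_nonneg hVm0 (sq_nonneg _)
    have hsI : 0 < Real.sqrt I := Real.sqrt_pos.mpr hwpos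
    have hsT : 0 ≤ Real.sqrt (T ω) := Real.sqrt_nonneg _
    have hmul : |Real.sqrt I - Real.sqrt (T ω)| * (Real.sqrt I + Real.sqrt (T ω))
        = |I - T ω| := by
      rw [← abs_of_nonneg (by positivity : (0:ℝ) ≤ Real.sqrt I + Real.sqrt (T ω)), ← abs_mul]
      congr 1
      have : (Real.sqrt I - Real.sqrt (T ω)) * (Real.sqrt I + Real.sqrt (T ω))
          = Real.sqrt I ^ 2 - Real.sqrt (T ω) ^ 2 := by ring
      rw [this, Real.sq_sqrt hwpos.le, Real.sq_sqrt hT0]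
    have hstep : |Real.sqrt I - Real.sqrt (T ω)| * Real.sqrt I ≤ B * Real.sqrt I := by
      calc |Real.sqrt I - Real.sqrt (T ω)| * Real.sqrt I
          ≤ |Real.sqrt I - Real.sqrt (T ω)| * (Real.sqrt I + Real.sqrt (T ω)) := by
            exact mul_le_mul_of_nonneg_left (by linarith) (abs_nonneg _)
        _ = |I - T ω| := hmul
        _ = |T ω - I| := abs_sub_comm _ _
        _ ≤ c := hω.le
        _ = B * Real.sqrt I := by rw [hc]; ring
    exact (mul_le_mul_iff_of_pos_right hsI).mp hstep
  -- put it together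
  have hcompl : ENNReal.ofReal (1 - δ) ≤ ℙ {ω | c ≤ |T ω - I|}ᶜ := by
    rw [prob_compl_eq_one_sub hEmeas]
    rw [ENNReal.ofReal_sub 1 hδ0.le, ENNReal.ofReal_one]
    exact tsub_le_tsub_left hEle' 1
  refine le_trans hcompl (le_trans (measure_mono hsubset) ?_)
  apply le_of_eq
  congr 1
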